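/- There exists M ∈ ℕ such that for all m ≥ M the following holds. Let (ũ_ij)_{i≠j, i,j∈[m]} be i.i.d. uniform on [0,1]; let B̃ ∈ ℝ^{m×m} be the random matrix with B̃_ii = 1 and B̃_ij = ũ_ij/√m for i ≠ j, and let B ∈ ℝ^{m×m} be the deterministic matrix with B_ii = 1 and B_ij = 1/√m for i ≠ j. Then with probability at least 1 − 1/m, every w ∈ ℝ^m with w ≥ 0 and B̃ᵀw ≤ e (componentwise, e the all-ones vector) satisfies Bᵀw ≤ 5·e; that is, the dualized uncertainty set W̃ = {w ≥ 0 : B̃ᵀw ≤ e} is contained in 5·W where W = {w ≥ 0 : Bᵀw ≤ e}. -/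

import Mathlib

open Matrix MeasureTheory ProbabilityTheory Real

/-- The worst-case recourse matrix: `B_ii = 1`, `B_ij = 1/√m` for `i ≠ j`. -/
noncomputable def badB (m : ℕ) : Matrix (Fin m) (Fin m) ℝ :=
  Matrix.of fun i j => if i = j then (1 : ℝ) else 1 / Real.sqrt m

/-- The random perturbed worst-case matrix: `B̃_ii = 1`, `B̃_ij = ũ_ij/√m` for `i ≠ j`. -/
noncomputable def badBrand (m : ℕ) {Ω : Type} (u : Fin m → Fin m → Ω → ℝ) (ω : Ω) :
    Matrix (Fin m) (Fin m) ℝ :=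
  Matrix.of fun i j => if i = j then (1 : ℝ) else u i j ω / Real.sqrt m


lemma my_precomp {ι κ Ω : Type*} [MeasurableSpace Ω] {μ : Measure Ω}
    {f : ι → Ω → ℝ} {g : κ → ι} (hg : Function.Injective g)
    (h : iIndepFun f μ) :
    iIndepFun (fun k => f (g k)) μ := by
  rw [iIndepFun_iff_measure_inter_preimage_eq_mul] at h ⊢
  intro S sets hsets
  classical
  have key := h (S.image g)
    (sets := Function.extend g sets (fun _ => Set.univ)) ?_
  · have h1 : (⋂ i ∈ S.image g, f i ⁻¹' Function.extend g sets (fun _ => Set.univ) i)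
        = ⋂ k ∈ S, f (g k) ⁻¹' sets k := by
      rw [Finset.set_biInter_finset_image]
      exact Set.iInter₂_congr fun k _ => by rw [hg.extend_apply]
    have h2 : (∏ i ∈ S.image g, μ (f i ⁻¹' Function.extend g sets (fun _ => Set.univ) i))
        = ∏ k ∈ S, μ (f (g k) ⁻¹' sets k) := by
      rw [Finset.prod_image (fun a _ b _ hab => hg hab)]
      exact Finset.prod_congr rfl fun k _ => by rw [hg.extend_apply]
    rw [h1, h2] at key
    exact key
  · intro i hi
    obtain ⟨k, hk, rfl⟩ := Finset.mem_image.mp hi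
    rw [hg.extend_apply]
    exact hsets k hk


lemma q_le : exp (3/10) * (1 - exp (-1)) ≤ 9/10 := by
  have h1 : exp (3/10) ≤ 1.396 := by
    have h3 : exp (3/10) ^ 3 = exp (9/10) := by
      rw [← Real.exp_nat_mul]; norm_num
    have h4 : exp (9/10) < 2.7182818286 :=
      lt_of_le_of_lt (Real.exp_le_exp.mpr (by norm_num)) Real.exp_one_lt_d9
    have h5 : exp (3/10) ^ 3 ≤ (1.396:ℝ) ^ 3 := by
      rw [h3]; nlinarith
    exact le_of_pow_le_pow_left₀ (by norm_num) (by norm_num) h5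
  have hme : exp (-1) * exp 1 = 1 := by rw [← Real.exp_add]; norm_num
  have h2 : (0.367 : ℝ) ≤ exp (-1) := by
    nlinarith [Real.exp_one_lt_d9, Real.exp_pos (-1:ℝ)]
  have h6 : exp (-1) ≤ 1 := Real.exp_le_one_iff.mpr (by norm_num)
  nlinarith [Real.exp_pos (3/10:ℝ)]

lemma unif_integral {Ω : Type*} [MeasurableSpace Ω] {Pr : Measure Ω}
    {f : Ω → ℝ} (hf : Measurable f)
    (hmap : Measure.map f Pr = volume.restrict (Set.Icc (0 : ℝ) 1)) :
    Integrable (fun ω => exp (-1 * f ω)) Pr ∧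
      ∫ ω, exp (-1 * f ω) ∂Pr = 1 - exp (-1) := by
  have hcont : Continuous fun x : ℝ => exp (-1 * x) := by fun_prop
  have hint : Integrable (fun x : ℝ => exp (-1 * x)) (volume.restrict (Set.Icc (0:ℝ) 1)) :=
    hcont.continuousOn.integrableOn_Icc
  have hcomp : Integrable (fun ω => exp (-1 * f ω)) Pr :=
    (integrable_map_measure (hcont.aestronglyMeasurable.mono_measure le_rfl)
      hf.aemeasurable).mp (by rw [hmap]; exact hint)
  refine ⟨hcomp, ?_⟩
  have h1 : ∫ ω, exp (-1 * f ω) ∂Pr = ∫ x, exp (-1 * x) ∂(Measure.map f Pr) := by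
    rw [integral_map hf.aemeasurable hcont.aestronglyMeasurable]
  rw [h1, hmap]
  have h2 : ∫ x in Set.Icc (0:ℝ) 1, exp (-1 * x) = ∫ x in (0:ℝ)..1, exp (-1 * x) := by
    rw [intervalIntegral.integral_of_le (by norm_num), integral_Icc_eq_integral_Ioc]
  rw [h2]
  have he : ∀ x : ℝ, exp (-1 * x) = exp (-x) := fun x => by ring_nf
  simp_rw [he]
  rw [intervalIntegral.integral_comp_neg (fun x => exp x), integral_exp]
  simp

/-- Chernoff bound for a sum of independent uniforms on `[0,1]`. -/
lemma row_chernoff {Ω : Type} [MeasurableSpace Ω] (Pr : Measure Ω) [IsProbabilityMeasure Pr]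
    {κ : Type} [Fintype κ] (f : κ → Ω → ℝ) (hmeas : ∀ k, Measurable (f k))
    (hind : iIndepFun f Pr)
    (hmap : ∀ k, Measure.map (f k) Pr = volume.restrict (Set.Icc (0 : ℝ) 1)) (a : ℝ) :
    (Pr {ω | ∑ k, f k ω ≤ a}).toReal ≤ exp a * (1 - exp (-1)) ^ (Fintype.card κ) := by
  classical
  set g : κ → Ω → ℝ := fun k => -f k with hg
  have hgmeas : ∀ k, Measurable (g k) := fun k => (hmeas k).neg
  have hgind : iIndepFun g Pr := by
    have := hind.comp (fun _ => (Neg.neg : ℝ → ℝ)) (fun _ => measurable_neg)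
    exact this
  -- integrability of exp (1 * g k ω)
  have hint1 : ∀ k, Integrable (fun ω => exp (1 * g k ω)) Pr := by
    intro k
    have := (unif_integral (hmeas k) (hmap k)).1
    simpa [hg] using this
  have hmgf1 : ∀ k, mgf (g k) Pr 1 = 1 - exp (-1) := by
    intro k
    have : mgf (g k) Pr 1 = mgf (f k) Pr (-1) := by
      rw [hg]; exact mgf_neg
    rw [this, mgf]
    exact (unif_integral (hmeas k) (hmap k)).2
  have hintS : Integrable (fun ω => exp (1 * (∑ k, g k) ω)) Pr :=
    hgind.integrable_exp_mul_sum hgmeas (fun k _ => hint1 k)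
  have hch := measure_ge_le_exp_mul_mgf (μ := Pr) (X := ∑ k, g k) (t := 1) (-a)
    (by norm_num) hintS
  have hset : {ω | ∑ k, f k ω ≤ a} = {ω | -a ≤ (∑ k, g k) ω} := by
    ext ω
    simp [hg, Finset.sum_apply, neg_le, Finset.sum_neg_distrib]
  rw [hset]
  refine hch.trans ?_
  rw [hgind.mgf_sum hgmeas]
  have : ∏ k, mgf (g k) Pr 1 = (1 - exp (-1)) ^ (Fintype.card κ) := by
    rw [Finset.prod_congr rfl (fun k _ => hmgf1 k), Finset.prod_const, Finset.card_univ]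
  rw [this]
  norm_num

lemma growth : ∀ m : ℕ, 100 ≤ m → (m : ℝ)^2 * (9/10 : ℝ)^(m-1) ≤ 1 := by
  intro m hm
  induction m, hm using Nat.le_induction with
  | base =>
      norm_num
  | succ n hn ih =>
      have h1 : (9/10:ℝ)^(n+1-1) = (9/10:ℝ)^(n-1) * (9/10) := by
        rw [Nat.add_sub_cancel, ← pow_succ]
        congr 1
        omega
      rw [h1]
      have hn' : (100:ℝ) ≤ (n:ℝ) := by exact_mod_cast hn
      have hpow : (0:ℝ) ≤ (9/10:ℝ)^(n-1) := by positivity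
      have key : ((n:ℝ)+1)^2 * (9/10) ≤ (n:ℝ)^2 := by nlinarith
      calc ((n+1:ℕ):ℝ)^2 * ((9/10:ℝ)^(n-1) * (9/10))
          = (((n:ℝ)+1)^2 * (9/10)) * (9/10:ℝ)^(n-1) := by push_cast; ring
        _ ≤ (n:ℝ)^2 * (9/10:ℝ)^(n-1) := by nlinarith
        _ ≤ 1 := ih

lemma det_step (m : ℕ) (hm : 6 ≤ m) {Ω : Type} (u : Fin m → Fin m → Ω → ℝ) (ω : Ω)
    (h01 : ∀ i j : Fin m, i ≠ j → u i j ω ∈ Set.Icc (0:ℝ) 1)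
    (hS : ∀ i : Fin m, (3/10:ℝ) * ((m:ℝ) - 1) ≤ ∑ j, (if i = j then 0 else u i j ω)) :
    ∀ w : Fin m → ℝ, 0 ≤ w → (badBrand m u ω)ᵀ *ᵥ w ≤ (fun _ => (1:ℝ)) →
      (badB m)ᵀ *ᵥ w ≤ (fun _ => (5:ℝ)) := by
  intro w hw hc
  have hmR : (6:ℝ) ≤ (m:ℝ) := by exact_mod_cast hm
  set s : ℝ := Real.sqrt m with hsdef
  have hs : 0 < s := Real.sqrt_pos.mpr (by positivity)
  have hs2 : s * s = (m:ℝ) := Real.mul_self_sqrt (by positivity)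
  -- rewrite constraints
  have hc' : ∀ j, w j + (∑ i, (if i = j then 0 else u i j ω * w i)) / s ≤ 1 := by
    intro j
    have h := hc j
    have hrw : ((badBrand m u ω)ᵀ *ᵥ w) j
        = ∑ i, (if i = j then (1:ℝ) else u i j ω / s) * w i := by
      simp [Matrix.mulVec, Matrix.transpose_apply, badBrand, dotProduct, Matrix.of_apply, hsdef]
    have hsplit : ∀ i : Fin m, (if i = j then (1:ℝ) else u i j ω / s) * w i
        = (if i = j then w i else 0) + (if i = j then 0 else u i j ω * w i) / s := by
      intro i
      by_cases hij : i = j <;> simp [hij, div_mul_eq_mul_div]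
    calc w j + (∑ i, (if i = j then 0 else u i j ω * w i)) / s
        = ∑ i, (if i = j then (1:ℝ) else u i j ω / s) * w i := by
          rw [Finset.sum_congr rfl (fun i _ => hsplit i), Finset.sum_add_distrib,
            Finset.sum_ite_eq' Finset.univ j w, ← Finset.sum_div]
          simp
      _ ≤ 1 := by rw [← hrw]; exact h
  -- each w j ≤ 1
  have hw1 : ∀ j, w j ≤ 1 := by
    intro j
    have h := hc' j
    have hnn : 0 ≤ (∑ i, (if i = j then 0 else u i j ω * w i)) / s := by
      apply div_nonneg _ hs.le
      apply Finset.sum_nonneg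
      intro i _
      by_cases hij : i = j
      · simp [hij]
      · simp only [hij, if_false]
        exact mul_nonneg (h01 i j hij).1 (hw i)
    linarith
  set T : ℝ := ∑ i, w i with hT
  have hTnn : 0 ≤ T := Finset.sum_nonneg fun i _ => hw i
  -- sum of constraints
  have hsum : T + (∑ i, w i * ∑ j, (if i = j then 0 else u i j ω)) / s ≤ (m:ℝ) := by
    have h := Finset.sum_le_sum (fun j (_ : j ∈ Finset.univ) => hc' j)
    simp only [Finset.sum_add_distrib, Finset.sum_const, Finset.card_univ,
      Fintype.card_fin, nsmul_eq_mul, mul_one] at h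
    rw [← Finset.sum_div] at h
    rw [Finset.sum_comm] at h
    have : ∀ i : Fin m, ∑ j, (if i = j then 0 else u i j ω * w i)
        = w i * ∑ j, (if i = j then 0 else u i j ω) := by
      intro i
      rw [Finset.mul_sum]
      exact Finset.sum_congr rfl fun j _ => by by_cases hij : i = j <;> simp [hij, mul_comm]
    rw [Finset.sum_congr rfl fun i _ => this i] at h
    rw [Finset.sum_div]
    rw [Finset.sum_div] at h
    exact h
  -- lower bound inner sums
  have hinner : (3/10:ℝ) * ((m:ℝ)-1) * T ≤ ∑ i, w i * ∑ j, (if i = j then 0 else u i j ω) := by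
    rw [hT, Finset.mul_sum]
    apply Finset.sum_le_sum
    intro i _
    rw [mul_comm ((3/10:ℝ) * ((m:ℝ)-1)) (w i)]
    exact mul_le_mul_of_nonneg_left (hS i) (hw i)
  have hTbound : (3/10:ℝ) * ((m:ℝ)-1) * T ≤ (m:ℝ) * s := by
    have h1 : (3/10:ℝ) * ((m:ℝ)-1) * T / s ≤ (m:ℝ) := by
      calc (3/10:ℝ) * ((m:ℝ)-1) * T / s
          ≤ (∑ i, w i * ∑ j, (if i = j then 0 else u i j ω)) / s :=
            div_le_div_of_nonneg_right hinner hs.le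
        _ ≤ (m:ℝ) := by linarith [hsum]
    calc (3/10:ℝ) * ((m:ℝ)-1) * T = ((3/10:ℝ) * ((m:ℝ)-1) * T / s) * s := by
          field_simp
      _ ≤ (m:ℝ) * s := mul_le_mul_of_nonneg_right h1 hs.le

  -- conclude
  intro j
  have hrw : ((badB m)ᵀ *ᵥ w) j = ∑ i, (if i = j then (1:ℝ) else 1 / s) * w i := by
    simp [Matrix.mulVec, Matrix.transpose_apply, badB, dotProduct, Matrix.of_apply, hsdef]
  have hterm : ∀ i : Fin m, (if i = j then (1:ℝ) else 1 / s) * w i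
      ≤ (if i = j then w i else 0) + w i / s := by
    intro i
    by_cases hij : i = j
    · subst hij
      simp only [if_true, eq_self_iff_true, ite_true, one_mul]
      linarith [div_nonneg (hw i) hs.le]
    · simp only [hij, if_false, zero_add, one_div, one_mul]
      rw [inv_mul_eq_div]
  have hle : ((badB m)ᵀ *ᵥ w) j ≤ w j + T / s := by
    rw [hrw]
    calc ∑ i, (if i = j then (1:ℝ) else 1 / s) * w i
        ≤ ∑ i, ((if i = j then w i else 0) + w i / s) :=
          Finset.sum_le_sum fun i _ => hterm i
      _ = w j + T / s := by
          rw [Finset.sum_add_distrib, Finset.sum_ite_eq' Finset.univ j w, ← Finset.sum_div]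
          simp [hT]
  have hTs : T / s ≤ 10 * (m:ℝ) / (3 * ((m:ℝ)-1)) := by
    rw [div_le_div_iff₀ hs (by linarith)]
    nlinarith
  have hfinal : 10 * (m:ℝ) / (3 * ((m:ℝ)-1)) ≤ 4 := by
    rw [div_le_iff₀ (by linarith)]
    nlinarith
  have := hw1 j
  show ((badB m)ᵀ *ᵥ w) j ≤ 5
  linarith

/-- For all sufficiently large `m`, with probability at least `1 - 1/m`,
the dualized uncertainty set `W̃ = {w ≥ 0 : B̃ᵀw ≤ e}` of the randomly perturbed
worst-case instance is contained in `5·W` where `W = {w ≥ 0 : Bᵀw ≤ e}`. -/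
theorem random_dual_set_in_scaled_dual_set :
    ∃ M : ℕ, ∀ m : ℕ, M ≤ m →
      ∀ (Ω : Type) [MeasurableSpace Ω] (Pr : Measure Ω) [IsProbabilityMeasure Pr]
        (u : Fin m → Fin m → Ω → ℝ),
        (∀ i j, i ≠ j → Measurable (u i j)) →
        iIndepFun
          (fun p : {p : Fin m × Fin m // p.1 ≠ p.2} => u p.1.1 p.1.2) Pr →
        (∀ i j, i ≠ j → Measure.map (u i j) Pr = volume.restrict (Set.Icc (0 : ℝ) 1)) →
        ENNReal.ofReal (1 - 1 / m) ≤
          Pr {ω | ∀ w : Fin m → ℝ, 0 ≤ w →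
              (badBrand m u ω)ᵀ *ᵥ w ≤ (fun _ => (1 : ℝ)) →
              (badB m)ᵀ *ᵥ w ≤ (fun _ => (5 : ℝ))} := by
  classical
  refine ⟨100, fun m hm Ω _ Pr _ u hmeas hind hmap => ?_⟩
  have hm0 : 0 < m := by omega
  have hmR : (100:ℝ) ≤ (m:ℝ) := by exact_mod_cast hm
  set a : ℝ := (3/10:ℝ) * ((m:ℝ) - 1) with ha
  -- the per-row sums over the subtype index
  set S : Fin m → Ω → ℝ := fun i ω => ∑ k : {j : Fin m // i ≠ j}, u i k.1 ω with hS
  have hSmeas : ∀ i, Measurable (S i) :=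
    fun i => Finset.measurable_sum _ fun k _ => hmeas i k.1 k.2
  set A : Fin m → Set Ω := fun i => {ω | S i ω ≤ a} with hA
  have hAmeas : ∀ i, MeasurableSet (A i) :=
    fun i => measurableSet_le (hSmeas i) measurable_const
  -- per-row Chernoff bound
  have hcard : ∀ i : Fin m, Fintype.card {j : Fin m // i ≠ j} = m - 1 := by
    intro i
    rw [Fintype.card_subtype_compl]
    simp
  have hrow : ∀ i, (Pr (A i)).toReal ≤ (9/10:ℝ) ^ (m - 1) := by
    intro i
    have hg : Function.Injective
        (fun k : {j : Fin m // i ≠ j} => (⟨(i, k.1), k.2⟩ : {p : Fin m × Fin m // p.1 ≠ p.2})) := by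
      intro k1 k2 h
      apply Subtype.ext
      have := congrArg (fun p => p.1.2) h
      exact this
    have hind' : iIndepFun
        (fun k : {j : Fin m // i ≠ j} => u i k.1) Pr := by
      exact my_precomp
        (g := fun k : {j : Fin m // i ≠ j} => (⟨(i, k.1), k.2⟩ : {p : Fin m × Fin m // p.1 ≠ p.2}))
        hg hind
    have h1 := row_chernoff Pr (fun k : {j : Fin m // i ≠ j} => u i k.1)
      (fun k => hmeas i k.1 k.2) hind' (fun k => hmap i k.1 k.2) a
    rw [hcard i] at h1
    refine h1.trans ?_
    -- exp a * (1 - exp (-1))^(m-1) ≤ (9/10)^(m-1)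
    have hcast : a = ((m - 1 : ℕ) : ℝ) * (3/10) := by
      rw [ha, Nat.cast_sub (by omega)]
      push_cast; ring
    rw [hcast, Real.exp_nat_mul, ← mul_pow]
    have he1 : exp (-1:ℝ) ≤ 1 := by
      rw [Real.exp_le_one_iff]; norm_num
    exact pow_le_pow_left₀ (mul_nonneg (Real.exp_pos _).le (by linarith)) q_le _
  have hrowE : ∀ i, Pr (A i) ≤ ENNReal.ofReal ((9/10:ℝ) ^ (m - 1)) := by
    intro i
    rw [ENNReal.le_ofReal_iff_toReal_le (measure_ne_top Pr _) (by positivity)]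
    exact hrow i
  -- the a.s. event that all entries are in [0,1]
  set N : Set Ω := ⋃ i, ⋃ j, ⋃ (_ : i ≠ j), u i j ⁻¹' (Set.Icc (0:ℝ) 1)ᶜ with hN
  have hNmeas : MeasurableSet N := by
    apply MeasurableSet.iUnion; intro i
    apply MeasurableSet.iUnion; intro j
    apply MeasurableSet.iUnion; intro hij
    exact (hmeas i j hij) measurableSet_Icc.compl
  have hNzero : Pr N = 0 := by
    rw [hN, measure_iUnion_null_iff]; intro i
    rw [measure_iUnion_null_iff]; intro j
    rw [measure_iUnion_null_iff]; intro hij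
    rw [← Measure.map_apply (hmeas i j hij) measurableSet_Icc.compl, hmap i j hij,
      Measure.restrict_apply measurableSet_Icc.compl]
    simp
  set Bad : Set Ω := (⋃ i, A i) ∪ N with hBad
  have hBadMeas : MeasurableSet Bad :=
    (MeasurableSet.iUnion fun i => hAmeas i).union hNmeas
  -- bound Pr Bad
  have hBadBound : Pr Bad ≤ ENNReal.ofReal (1 / m) := by
    calc Pr Bad ≤ Pr (⋃ i, A i) + Pr N := measure_union_le _ _
      _ = Pr (⋃ i, A i) := by rw [hNzero, add_zero]
      _ ≤ ∑ i : Fin m, Pr (A i) := measure_iUnion_fintype_le _ _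
      _ ≤ ∑ _i : Fin m, ENNReal.ofReal ((9/10:ℝ) ^ (m - 1)) :=
          Finset.sum_le_sum fun i _ => hrowE i
      _ = (m : ℕ) * ENNReal.ofReal ((9/10:ℝ) ^ (m - 1)) := by
          rw [Finset.sum_const, Finset.card_univ, Fintype.card_fin, nsmul_eq_mul]
      _ = ENNReal.ofReal ((m:ℝ) * (9/10:ℝ) ^ (m - 1)) := by
          rw [ENNReal.ofReal_mul (by positivity)]
          congr 1
          simp [ENNReal.ofReal_natCast]
      _ ≤ ENNReal.ofReal (1 / m) := by
          apply ENNReal.ofReal_le_ofReal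
          rw [le_div_iff₀ (by positivity : (0:ℝ) < (m:ℝ))]
          nlinarith [growth m hm, pow_nonneg (by norm_num : (0:ℝ) ≤ 9/10) (m-1)]
  -- Badᶜ is contained in the target set
  have hsub : Badᶜ ⊆ {ω | ∀ w : Fin m → ℝ, 0 ≤ w →
      (badBrand m u ω)ᵀ *ᵥ w ≤ (fun _ => (1 : ℝ)) →
      (badB m)ᵀ *ᵥ w ≤ (fun _ => (5 : ℝ))} := by
    intro ω hω
    rw [hBad, Set.compl_union] at hω
    obtain ⟨hω1, hω2⟩ := hω
    have h01 : ∀ i j : Fin m, i ≠ j → u i j ω ∈ Set.Icc (0:ℝ) 1 := by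
      intro i j hij
      by_contra hcon
      exact hω2 (by
        rw [hN]
        exact Set.mem_iUnion.mpr ⟨i, Set.mem_iUnion.mpr ⟨j, Set.mem_iUnion.mpr ⟨hij, hcon⟩⟩⟩)
    have hSge : ∀ i : Fin m, a ≤ ∑ j, (if i = j then 0 else u i j ω) := by
      intro i
      have hnot : ¬ (S i ω ≤ a) := fun h => hω1 (Set.mem_iUnion.mpr ⟨i, h⟩)
      have hconv : ∑ j, (if i = j then (0:ℝ) else u i j ω) = S i ω := by
        rw [hS]
        rw [show (fun j => if i = j then (0:ℝ) else u i j ω)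
            = fun j => if i ≠ j then u i j ω else 0 from funext fun j => (ite_not _ _ _).symm]
        rw [← Finset.sum_filter]
        exact Finset.sum_subtype _ (by simp) _
      rw [hconv]
      linarith [lt_of_not_ge hnot]
    exact det_step m (by omega) u ω h01 hSge
  -- conclude
  calc ENNReal.ofReal (1 - 1 / m)
      = 1 - ENNReal.ofReal (1 / m) := by
        rw [ENNReal.ofReal_sub 1 (by positivity), ENNReal.ofReal_one]
    _ ≤ 1 - Pr Bad := tsub_le_tsub_left hBadBound 1
    _ = Pr Badᶜ := (prob_compl_eq_one_sub hBadMeas).symm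
    _ ≤ _ := measure_mono hsub
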